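/- arXiv:2002.07668 — 2 statements merged into one kernel-verified Lean document; each statement's English description precedes it below -/
import Mathlib

section
/- Let 0 < λ < 1, α > 0, C > 0, x ∈ ℝ^m, and f ∈ L²(B(x,1)). Suppose there are real numbers τ_1, τ_2, τ_3, … such that for every integer k ≥ 0 one has ‖f − (τ_1 + ⋯ + τ_k)‖_{B(x,λ^k)} ≤ C λ^{kα} (the sum being empty when k = 0). Then Σ_k |τ_k| < ∞, and setting τ = Σ_{k≥1} τ_k there is a constant C′ = κ(α, λ, m)·C such that ‖f − τ‖_{B(x,r)} ≤ C′ r^α for all 0 < r < 1. -/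
noncomputable section

open MeasureTheory Metric

namespace ConeSchauder

/-- Euclidean space `ℝ^m`. -/
abbrev E (m : ℕ) := EuclideanSpace ℝ (Fin m)

/-- Index of the first coordinate of the `a`-th `ℝ²` factor. -/
def w1 (m n : ℕ) (h : 2 * n ≤ m) (a : Fin n) : Fin m :=
  ⟨2 * a.1, by have := a.isLt; omega⟩

/-- Index of the second coordinate of the `a`-th `ℝ²` factor. -/
def w2 (m n : ℕ) (h : 2 * n ≤ m) (a : Fin n) : Fin m :=
  ⟨2 * a.1 + 1, by have := a.isLt; omega⟩

/-- The radial coordinate `r_a` of the `a`-th conical factor. -/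
def ra (m n : ℕ) (h : 2 * n ≤ m) (a : Fin n) (x : E m) : ℝ :=
  Real.sqrt (x (w1 m n h a) ^ 2 + x (w2 m n h a) ^ 2)

/-- The singular set `S = ∪_a {w_a = 0}`. -/
def Sing (m n : ℕ) (h : 2 * n ≤ m) : Set (E m) :=
  {x | ∃ a : Fin n, x (w1 m n h a) = 0 ∧ x (w2 m n h a) = 0}

/-- The inner product `⟨G(x)⁻¹ v, v'⟩`, where `G` is the coefficient matrix of the cone
metric: the `a`-th `2×2` block of `G(x)⁻¹` is `β_a⁻² Id + (1 - β_a⁻²) w_a w_aᵀ/|w_a|²`,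
and the block corresponding to the Euclidean directions is the identity. -/
def blockInner (b wx wy vx vy vx' vy' : ℝ) : ℝ :=
  b⁻¹ ^ 2 * (vx * vx' + vy * vy')
    + (1 - b⁻¹ ^ 2) * ((wx * vx + wy * vy) * (wx * vx' + wy * vy')) / (wx ^ 2 + wy ^ 2)

def gInner (m n : ℕ) (h : 2 * n ≤ m) (β : Fin n → ℝ) (x : E m) (v v' : Fin m → ℝ) : ℝ :=
  (∑ a : Fin n, blockInner (β a) (x (w1 m n h a)) (x (w2 m n h a))
      (v (w1 m n h a)) (v (w2 m n h a)) (v' (w1 m n h a)) (v' (w2 m n h a)))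
  + ∑ i : Fin m, (if 2 * n ≤ i.1 then v i * v' i else 0)

/-- The (Euclidean) gradient vector of `ψ` at `x`, via `fderiv` (which is defined almost
everywhere for Lipschitz functions, with junk value `0` elsewhere). -/
def grad {m : ℕ} (ψ : E m → ℝ) (x : E m) : Fin m → ℝ :=
  fun i => fderiv ℝ ψ x (EuclideanSpace.single i 1)

/-- Test functions on `Ω`: compactly supported Lipschitz functions with support in `Ω`. -/
def IsTest {m : ℕ} (Ω : Set (E m)) (ψ : E m → ℝ) : Prop :=
  (∃ K, LipschitzWith K ψ) ∧ HasCompactSupport ψ ∧ tsupport ψ ⊆ Ω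

/-- `Du` is the componentwise weak (Euclidean) gradient of `u` on `Ω`. -/
def IsWeakGradOn {m : ℕ} (Ω : Set (E m)) (u : E m → ℝ) (Du : E m → Fin m → ℝ) : Prop :=
  ∀ ψ : E m → ℝ, IsTest Ω ψ → ∀ i : Fin m,
    ∫ x in Ω, u x * grad ψ x i = - ∫ x in Ω, Du x i * ψ x

/-- `u ∈ W^{1,2}(Ω)`, with weak gradient `Du`. -/
def MemW12 {m : ℕ} (Ω : Set (E m)) (u : E m → ℝ) (Du : E m → Fin m → ℝ) : Prop :=
  MemLp u 2 (volume.restrict Ω) ∧ (∀ i, MemLp (fun x => Du x i) 2 (volume.restrict Ω))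
    ∧ IsWeakGradOn Ω u Du

/-- `u ∈ W^{1,2}(Ω)` (with weak gradient `Du`) is a weak solution of `Δ_g u = f` on `Ω`:
`∫_Ω ⟨G(x)⁻¹ ∇u, ∇ψ⟩ = -∫_Ω f ψ` for every compactly supported Lipschitz test function. -/
def IsWeakSol (m n : ℕ) (h : 2 * n ≤ m) (β : Fin n → ℝ) (Ω : Set (E m))
    (u : E m → ℝ) (Du : E m → Fin m → ℝ) (f : E m → ℝ) : Prop :=
  MemW12 Ω u Du ∧
  ∀ ψ : E m → ℝ, IsTest Ω ψ →
    ∫ x in Ω, gInner m n h β x (Du x) (grad ψ x) = - ∫ x in Ω, f x * ψ x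

/-- Partial derivative in the `i`-th coordinate direction. -/
def pd {m : ℕ} (i : Fin m) (u : E m → ℝ) : E m → ℝ :=
  fun x => fderiv ℝ u x (EuclideanSpace.single i 1)

/-- The first order operator `∂_{r_a} u = ⟨w_a, ∇_{w_a} u⟩ / |w_a|`. -/
def Dra (m n : ℕ) (h : 2 * n ≤ m) (a : Fin n) (u : E m → ℝ) : E m → ℝ :=
  fun x => (x (w1 m n h a) * pd (w1 m n h a) u x + x (w2 m n h a) * pd (w2 m n h a) u x)
    / ra m n h a x

/-- The first order operator `r_a⁻¹ ∂_{θ_a} u = ⟨w_a^⊥, ∇_{w_a} u⟩ / |w_a|`. -/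
def Dth (m n : ℕ) (h : 2 * n ≤ m) (a : Fin n) (u : E m → ℝ) : E m → ℝ :=
  fun x => (x (w1 m n h a) * pd (w2 m n h a) u x - x (w2 m n h a) * pd (w1 m n h a) u x)
    / ra m n h a x

/-- The conical Laplacian `Δ_{β_a} = ∂²_{r_a} + r_a⁻¹ ∂_{r_a} + β_a⁻² r_a⁻² ∂²_{θ_a}`. -/
def conLap (m n : ℕ) (h : 2 * n ≤ m) (β : Fin n → ℝ) (a : Fin n) (u : E m → ℝ) : E m → ℝ :=
  fun x => Dra m n h a (Dra m n h a u) x + Dra m n h a u x / ra m n h a x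
    + (β a)⁻¹ ^ 2 * Dth m n h a (Dth m n h a u) x

/-- The collection `D₂` of second order operators. -/
def D2 (m n : ℕ) (h : 2 * n ≤ m) (β : Fin n → ℝ) : Set ((E m → ℝ) → E m → ℝ) :=
  {D | (∃ i j : Fin m, 2 * n ≤ i.1 ∧ 2 * n ≤ j.1 ∧ D = fun u => pd i (pd j u))
    ∨ (∃ (a : Fin n) (i : Fin m), 2 * n ≤ i.1 ∧
        (D = (fun u => Dra m n h a (pd i u)) ∨ D = fun u => Dth m n h a (pd i u)))
    ∨ (∃ a b : Fin n, a ≠ b ∧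
        (D = (fun u => Dra m n h a (Dra m n h b u)) ∨
         D = (fun u => Dth m n h a (Dth m n h b u)) ∨
         D = fun u => Dra m n h a (Dth m n h b u)))
    ∨ (∃ a : Fin n, D = conLap m n h β a)
    ∨ (∃ a : Fin n, β a < 1/2 ∧
        (D = (fun u => Dra m n h a (Dra m n h a u)) ∨
         D = (fun u => Dth m n h a (Dth m n h a u)) ∨
         D = fun u => Dth m n h a (Dra m n h a u)))}

/-- `μ = min {1} ∪ {1/β_a − 1 : β_a ≥ 1/2} ∪ {1/β_a − 2 : β_a < 1/2}`. -/
def mu (n : ℕ) (β : Fin n → ℝ) : ℝ :=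
  sInf ({1} ∪ {t | ∃ a, 1/2 ≤ β a ∧ t = 1 / β a - 1}
    ∪ {t | ∃ a, β a < 1/2 ∧ t = 1 / β a - 2})

/-- Generators of the space `H_{≤2}` of subquadratic harmonic functions. -/
def H2gens (m n : ℕ) (h : 2 * n ≤ m) (β : Fin n → ℝ) : Set (E m → ℝ) :=
  {P | P = fun _ => (1:ℝ)}
  ∪ {P | ∃ i : Fin m, 2 * n ≤ i.1 ∧ P = fun x => x i}
  ∪ {P | ∃ a : Fin n, 1/2 ≤ β a ∧
      (P = (fun x => ra m n h a x ^ (1 / β a - 1) * x (w1 m n h a)) ∨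
       P = fun x => ra m n h a x ^ (1 / β a - 1) * x (w2 m n h a))}
  ∪ {P | ∃ i j : Fin m, 2 * n ≤ i.1 ∧ 2 * n ≤ j.1 ∧ i ≠ j ∧
      (P = (fun x => x i * x j) ∨ P = fun x => x i ^ 2 - x j ^ 2)}
  ∪ {P | ∃ a b : Fin n, a ≠ b ∧ P = fun x => ra m n h a x ^ 2 - ra m n h b x ^ 2}
  ∪ {P | ∃ (a : Fin n) (i : Fin m), 2 * n ≤ i.1 ∧
      P = fun x => ra m n h a x ^ 2 - 2 * x i ^ 2}

/-- The space `H_{≤2}` of subquadratic harmonic functions, as the span of its generators. -/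
def H2 (m n : ℕ) (h : 2 * n ≤ m) (β : Fin n → ℝ) : Submodule ℝ (E m → ℝ) :=
  Submodule.span ℝ (H2gens m n h β)

/-- Scale invariant `L²` norm `‖u‖_{B(x,ρ)} = (ρ^{-m} ∫_{B(x,ρ)} u²)^{1/2}`. -/
def nrm (m : ℕ) (x : E m) (ρ : ℝ) (u : E m → ℝ) : ℝ :=
  Real.sqrt ((ρ ^ m)⁻¹ * ∫ y in ball x ρ, u y ^ 2)

/-- The `L²(Ω)` norm. -/
def l2 {m : ℕ} (Ω : Set (E m)) (u : E m → ℝ) : ℝ :=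
  Real.sqrt (∫ y in Ω, u y ^ 2)

/-- `u` is positively homogeneous of (real) degree `d`. -/
def HomDeg {m : ℕ} (d : ℝ) (u : E m → ℝ) : Prop :=
  ∀ c : ℝ, 0 < c → ∀ x, u (c • x) = c ^ d * u x

/-- `u` is weakly harmonic (for the cone metric) on every ball around the origin. -/
def WeaklyHarmonicLoc (m n : ℕ) (h : 2 * n ≤ m) (β : Fin n → ℝ) (u : E m → ℝ) : Prop :=
  ∀ R : ℝ, 0 < R → ∃ Du, IsWeakSol m n h β (ball 0 R) u Du (fun _ => 0)

/-- The squared norm `|Hess_g u|²` of the Hessian of `u` with respect to the cone metric,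
computed in the `g`-orthonormal frame `{∂_{r_a}, (β_a r_a)⁻¹ ∂_{θ_a}, ∂_{s_i}}`. -/
def hessSq (m n : ℕ) (h : 2 * n ≤ m) (β : Fin n → ℝ) (u : E m → ℝ) (x : E m) : ℝ :=
  (∑ a : Fin n,
      (Dra m n h a (Dra m n h a u) x ^ 2
        + 2 * ((β a)⁻¹ * Dra m n h a (Dth m n h a u) x) ^ 2
        + ((β a)⁻¹ ^ 2 * Dth m n h a (Dth m n h a u) x
            + Dra m n h a u x / ra m n h a x) ^ 2))
  + (∑ a : Fin n, ∑ b : Fin n, if a ≠ b then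
        Dra m n h a (Dra m n h b u) x ^ 2
        + ((β b)⁻¹ * Dra m n h a (Dth m n h b u) x) ^ 2
        + ((β a)⁻¹ * Dth m n h a (Dra m n h b u) x) ^ 2
        + ((β a)⁻¹ * (β b)⁻¹ * Dth m n h a (Dth m n h b u) x) ^ 2
      else 0)
  + 2 * (∑ a : Fin n, ∑ i : Fin m, if 2 * n ≤ i.1 then
        Dra m n h a (pd i u) x ^ 2 + ((β a)⁻¹ * Dth m n h a (pd i u) x) ^ 2
      else 0)
  + ∑ i : Fin m, ∑ j : Fin m, if 2 * n ≤ i.1 ∧ 2 * n ≤ j.1 then pd i (pd j u) x ^ 2 else 0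



section Aux

variable {m : ℕ}

private lemma vol_ball_eq (x : E m) {ρ : ℝ} (hρ : 0 < ρ) :
    volume (ball x ρ) = ENNReal.ofReal (ρ ^ m) * volume (ball (0 : E m) 1) := by
  rcases Nat.eq_zero_or_pos m with hm | hm
  · subst hm
    have huniv : ∀ (z : E 0) (s : ℝ), 0 < s → ball z s = Set.univ := by
      intro z s hs
      ext y
      simp [Metric.mem_ball, Subsingleton.elim y z, hs]
    rw [huniv x ρ hρ, huniv 0 1 one_pos]
    simp
  · have : Nontrivial (E m) := by
      apply Module.nontrivial_of_finrank_pos (R := ℝ)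
      rw [finrank_euclideanSpace_fin]
      exact hm
    rw [Measure.addHaar_ball volume x hρ.le, finrank_euclideanSpace_fin]

private lemma memL2_smaller {x : E m} {u : E m → ℝ} {ρ ρ' : ℝ} (h : ρ' ≤ ρ)
    (hu : MemLp u 2 (volume.restrict (ball x ρ))) :
    MemLp u 2 (volume.restrict (ball x ρ')) :=
  hu.mono_measure (Measure.restrict_mono (ball_subset_ball h) le_rfl)

private lemma memL2_const (x : E m) (ρ : ℝ) (c : ℝ) :
    MemLp (fun _ : E m => c) 2 (volume.restrict (ball x ρ)) := by
  have : IsFiniteMeasure (volume.restrict (ball x ρ)) :=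
    ⟨by rw [Measure.restrict_apply_univ]; exact measure_ball_lt_top⟩
  exact memLp_const c

private lemma nrm_eq_eLpNorm (x : E m) {ρ : ℝ} (hρ : 0 < ρ) {u : E m → ℝ}
    (hu : MemLp u 2 (volume.restrict (ball x ρ))) :
    nrm m x ρ u
      = Real.sqrt (ρ ^ m)⁻¹ * (eLpNorm u 2 (volume.restrict (ball x ρ))).toReal := by
  unfold nrm
  rw [Real.sqrt_mul (by positivity)]
  congr 1
  rw [hu.eLpNorm_eq_integral_rpow_norm (by norm_num) (by norm_num),
    ENNReal.toReal_ofReal (by positivity)]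
  have h2 : ((2 : ENNReal)).toReal = (2 : ℝ) := by norm_num
  rw [h2]
  have hint : (∫ y in ball x ρ, ‖u y‖ ^ (2 : ℝ)) = ∫ y in ball x ρ, u y ^ 2 := by
    refine integral_congr_ae (Filter.Eventually.of_forall fun y => ?_)
    simp only [Real.rpow_two, Real.norm_eq_abs, sq_abs]
  rw [hint, Real.sqrt_eq_rpow]
  norm_num

private lemma nrm_mono (x : E m) {ρ ρ' : ℝ} (h0 : 0 < ρ') (h : ρ' ≤ ρ) {u : E m → ℝ}
    (hu : MemLp u 2 (volume.restrict (ball x ρ))) :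
    nrm m x ρ' u ≤ Real.sqrt ((ρ' ^ m)⁻¹ * ρ ^ m) * nrm m x ρ u := by
  have h0' : 0 < ρ := lt_of_lt_of_le h0 h
  rw [nrm_eq_eLpNorm x h0 (memL2_smaller h hu), nrm_eq_eLpNorm x h0' hu]
  have hN : (eLpNorm u 2 (volume.restrict (ball x ρ'))).toReal
      ≤ (eLpNorm u 2 (volume.restrict (ball x ρ))).toReal :=
    ENNReal.toReal_mono hu.eLpNorm_ne_top
      (eLpNorm_mono_measure u (Measure.restrict_mono (ball_subset_ball h) le_rfl))
  have hc : Real.sqrt ((ρ' ^ m)⁻¹ * ρ ^ m) * Real.sqrt (ρ ^ m)⁻¹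
      = Real.sqrt (ρ' ^ m)⁻¹ := by
    rw [← Real.sqrt_mul (by positivity)]
    congr 1
    rw [mul_assoc, mul_inv_cancel₀ (by positivity : (ρ : ℝ) ^ m ≠ 0), mul_one]
  calc Real.sqrt (ρ' ^ m)⁻¹ * (eLpNorm u 2 (volume.restrict (ball x ρ'))).toReal
      ≤ Real.sqrt (ρ' ^ m)⁻¹ * (eLpNorm u 2 (volume.restrict (ball x ρ))).toReal := by
        gcongr
    _ = Real.sqrt ((ρ' ^ m)⁻¹ * ρ ^ m) *
          (Real.sqrt (ρ ^ m)⁻¹ * (eLpNorm u 2 (volume.restrict (ball x ρ))).toReal) := by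
        rw [← mul_assoc, hc]

private lemma nrm_triangle (x : E m) {ρ : ℝ} (h0 : 0 < ρ) {u v : E m → ℝ}
    (hu : MemLp u 2 (volume.restrict (ball x ρ)))
    (hv : MemLp v 2 (volume.restrict (ball x ρ))) :
    nrm m x ρ (fun y => u y + v y) ≤ nrm m x ρ u + nrm m x ρ v := by
  have huv : MemLp (fun y => u y + v y) 2 (volume.restrict (ball x ρ)) := hu.add hv
  rw [nrm_eq_eLpNorm x h0 huv, nrm_eq_eLpNorm x h0 hu, nrm_eq_eLpNorm x h0 hv, ← mul_add]
  refine mul_le_mul_of_nonneg_left ?_ (Real.sqrt_nonneg _)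
  have htri : eLpNorm (fun y => u y + v y) 2 (volume.restrict (ball x ρ))
      ≤ eLpNorm u 2 (volume.restrict (ball x ρ)) + eLpNorm v 2 (volume.restrict (ball x ρ)) :=
    eLpNorm_add_le hu.aestronglyMeasurable hv.aestronglyMeasurable one_le_two
  have hfin : eLpNorm u 2 (volume.restrict (ball x ρ))
      + eLpNorm v 2 (volume.restrict (ball x ρ)) ≠ ⊤ :=
    ENNReal.add_ne_top.2 ⟨hu.eLpNorm_ne_top, hv.eLpNorm_ne_top⟩
  calc (eLpNorm (fun y => u y + v y) 2 (volume.restrict (ball x ρ))).toReal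
      ≤ (eLpNorm u 2 (volume.restrict (ball x ρ))
          + eLpNorm v 2 (volume.restrict (ball x ρ))).toReal :=
        ENNReal.toReal_mono hfin htri
    _ = _ := ENNReal.toReal_add hu.eLpNorm_ne_top hv.eLpNorm_ne_top

private lemma nrm_const (x : E m) {ρ : ℝ} (h0 : 0 < ρ) (c : ℝ) :
    nrm m x ρ (fun _ => c)
      = |c| * Real.sqrt (volume (ball (0 : E m) 1)).toReal := by
  unfold nrm
  rw [setIntegral_const]
  have hvol : (volume (ball x ρ)).toReal
      = ρ ^ m * (volume (ball (0 : E m) 1)).toReal := by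
    rw [vol_ball_eq x h0, ENNReal.toReal_mul, ENNReal.toReal_ofReal (by positivity)]
  rw [measureReal_def, hvol, smul_eq_mul]
  have hρm : (0 : ℝ) < ρ ^ m := by positivity
  have : (ρ ^ m)⁻¹ * (ρ ^ m * (volume (ball (0 : E m) 1)).toReal * c ^ 2)
      = c ^ 2 * (volume (ball (0 : E m) 1)).toReal := by
    field_simp
  rw [this, Real.sqrt_mul (sq_nonneg c), Real.sqrt_sq_eq_abs]

private lemma nrm_neg (x : E m) (ρ : ℝ) (v : E m → ℝ) :
    nrm m x ρ (fun y => -(v y)) = nrm m x ρ v := by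
  unfold nrm
  simp only [neg_sq]

end Aux

/-- summing the scale-by-scale approximations. -/
theorem stmt8 (m : ℕ) (lam α : ℝ) (hlam0 : 0 < lam) (hlam1 : lam < 1) (hα : 0 < α) :
    ∃ κ : ℝ, 0 < κ ∧ ∀ (x : E m) (f : E m → ℝ) (τ : ℕ → ℝ) (C : ℝ), 0 < C →
      MemLp f 2 (volume.restrict (ball x 1)) →
      (∀ k : ℕ, nrm m x (lam ^ k) (fun y => f y - ∑ j ∈ Finset.range k, τ j)
        ≤ C * (lam ^ k) ^ α) →
      Summable (fun k => |τ k|) ∧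
      ∀ r : ℝ, 0 < r → r < 1 →
        nrm m x r (fun y => f y - ∑' k, τ k) ≤ (κ * C) * r ^ α := by
  classical
  set V : ℝ := (volume (ball (0 : E m) 1)).toReal with hVdef
  have hV : 0 < V :=
    ENNReal.toReal_pos (measure_ball_pos volume 0 one_pos).ne' measure_ball_lt_top.ne
  have hsV : 0 < Real.sqrt V := Real.sqrt_pos.2 hV
  set q : ℝ := lam ^ α with hqdef
  have hq0 : 0 < q := Real.rpow_pos_of_pos hlam0 α
  have hq1 : q < 1 := Real.rpow_lt_one hlam0.le hlam1 hα
  have h1q : 0 < 1 - q := by linarith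
  set L : ℝ := Real.sqrt (lam⁻¹ ^ m) with hLdef
  have hL : 0 < L := Real.sqrt_pos.2 (by positivity)
  set A : ℝ := (1 + L) / Real.sqrt V with hAdef
  have hA : 0 < A := by positivity
  have hlamne : (lam : ℝ) ≠ 0 := hlam0.ne'
  have hone : 0 < 1 + A * Real.sqrt V / (1 - q) :=
    add_pos_of_pos_of_nonneg one_pos (div_nonneg (by positivity) h1q.le)
  have hrpow : (0:ℝ) < lam ^ (-α) := Real.rpow_pos_of_pos hlam0 _
  refine ⟨L * (1 + A * Real.sqrt V / (1 - q)) * lam ^ (-α),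
    mul_pos (mul_pos hL hone) hrpow, ?_⟩
  intro x f τ C hC hf hyp
  have hpowle1 : ∀ k : ℕ, (lam ^ k : ℝ) ≤ 1 := fun k => pow_le_one₀ hlam0.le hlam1.le
  have hS : ∀ k : ℕ, MemLp (fun y => f y - ∑ j ∈ Finset.range k, τ j) 2
      (volume.restrict (ball x (lam ^ k))) := fun k =>
    (memL2_smaller (hpowle1 k) hf).sub (memL2_const x _ _)
  have hqpow : ∀ j : ℕ, ((lam : ℝ) ^ j) ^ α = q ^ j := by
    intro j
    rw [hqdef, ← Real.rpow_natCast lam j, ← Real.rpow_mul hlam0.le,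
      mul_comm (j : ℝ) α, Real.rpow_mul hlam0.le, Real.rpow_natCast]
  have hargall : ∀ k : ℕ, (((lam : ℝ) ^ (k+1)) ^ m)⁻¹ * (lam ^ k) ^ m = lam⁻¹ ^ m := by
    intro k
    have hb : ((lam : ℝ) ^ (k+1))⁻¹ * lam ^ k = lam⁻¹ := by
      rw [pow_succ, mul_inv, mul_comm ((lam ^ k)⁻¹) lam⁻¹, mul_assoc,
        inv_mul_cancel₀ (pow_ne_zero k hlamne), mul_one]
    rw [← inv_pow, ← mul_pow, hb]
  have hnn : ∀ (ρ : ℝ) (u : E m → ℝ), 0 ≤ nrm m x ρ u := fun _ _ => Real.sqrt_nonneg _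
  have key : ∀ k : ℕ, |τ k| * Real.sqrt V ≤ C * (1 + L) * q ^ k := by
    intro k
    have hk1 : (0:ℝ) < lam ^ (k+1) := pow_pos hlam0 _
    have hk0 : (0:ℝ) < lam ^ k := pow_pos hlam0 _
    have hle : (lam : ℝ) ^ (k+1) ≤ lam ^ k :=
      pow_le_pow_of_le_one hlam0.le hlam1.le (Nat.le_succ k)
    have hfun : (fun _ : E m => τ k)
        = fun y => (f y - ∑ j ∈ Finset.range k, τ j)
            + -(f y - ∑ j ∈ Finset.range (k+1), τ j) := by
      funext y
      rw [Finset.sum_range_succ]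
      ring
    have hv : MemLp (fun y => -(f y - ∑ j ∈ Finset.range (k+1), τ j)) 2
        (volume.restrict (ball x (lam ^ (k+1)))) := (hS (k+1)).neg
    have hSk1b : nrm m x (lam ^ (k+1))
          (fun y => f y - ∑ j ∈ Finset.range (k+1), τ j) ≤ C * q ^ (k+1) := by
      have := hyp (k+1)
      rwa [hqpow (k+1)] at this
    have hSkb : nrm m x (lam ^ (k+1)) (fun y => f y - ∑ j ∈ Finset.range k, τ j)
        ≤ L * (C * q ^ k) := by
      calc nrm m x (lam ^ (k+1)) (fun y => f y - ∑ j ∈ Finset.range k, τ j)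
          ≤ Real.sqrt (((lam ^ (k+1)) ^ m)⁻¹ * (lam ^ k) ^ m)
              * nrm m x (lam ^ k) (fun y => f y - ∑ j ∈ Finset.range k, τ j) :=
            nrm_mono x hk1 hle (hS k)
        _ ≤ L * (C * q ^ k) := by
            rw [hargall k, ← hLdef]
            refine mul_le_mul le_rfl ?_ (hnn _ _) hL.le
            have := hyp k
            rwa [hqpow k] at this
    calc |τ k| * Real.sqrt V
        = nrm m x (lam ^ (k+1)) (fun _ => τ k) := (nrm_const x hk1 (τ k)).symm
      _ = nrm m x (lam ^ (k+1)) (fun y => (f y - ∑ j ∈ Finset.range k, τ j)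
            + -(f y - ∑ j ∈ Finset.range (k+1), τ j)) := by rw [hfun]
      _ ≤ nrm m x (lam ^ (k+1)) (fun y => f y - ∑ j ∈ Finset.range k, τ j)
            + nrm m x (lam ^ (k+1))
                (fun y => -(f y - ∑ j ∈ Finset.range (k+1), τ j)) :=
          nrm_triangle x hk1 (memL2_smaller hle (hS k)) hv
      _ = nrm m x (lam ^ (k+1)) (fun y => f y - ∑ j ∈ Finset.range k, τ j)
            + nrm m x (lam ^ (k+1)) (fun y => f y - ∑ j ∈ Finset.range (k+1), τ j) := by
          rw [nrm_neg]
      _ ≤ L * (C * q ^ k) + C * q ^ (k+1) := add_le_add hSkb hSk1b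
      _ ≤ C * (1 + L) * q ^ k := by
          have hqk : (0:ℝ) < q ^ k := pow_pos hq0 _
          have hprod : 0 ≤ C * q ^ k * (1 - q) :=
            mul_nonneg (mul_nonneg hC.le hqk.le) h1q.le
          have hrw : L * (C * q ^ k) + C * q ^ (k+1)
              = C * (1 + L) * q ^ k - C * q ^ k * (1 - q) := by
            rw [pow_succ]; ring
          linarith
  have key' : ∀ k : ℕ, |τ k| ≤ C * A * q ^ k := by
    intro k
    calc |τ k| = |τ k| * Real.sqrt V / Real.sqrt V := by field_simp
      _ ≤ C * (1 + L) * q ^ k / Real.sqrt V := by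
          exact (div_le_div_iff_of_pos_right hsV).2 (key k)
      _ = C * A * q ^ k := by rw [hAdef]; ring
  have hsummable : Summable (fun k => |τ k|) := by
    refine Summable.of_nonneg_of_le (fun k => abs_nonneg _) key' ?_
    exact (summable_geometric_of_lt_one hq0.le hq1).mul_left (C * A)
  refine ⟨hsummable, ?_⟩
  have hτ : Summable τ := hsummable.of_abs
  have htail : ∀ k : ℕ, |∑' j, τ (j + k)| ≤ C * A * q ^ k / (1 - q) := by
    intro k
    have hshift : Summable (fun j => |τ (j + k)|) := (summable_nat_add_iff k).2 hsummable
    have hgeo : Summable (fun j : ℕ => C * A * q ^ (j + k)) := by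
      have := ((summable_geometric_of_lt_one hq0.le hq1).mul_left (C * A)).mul_right (q ^ k)
      simpa [pow_add, mul_comm, mul_assoc, mul_left_comm] using this
    have habs : |∑' j, τ (j + k)| ≤ ∑' j, |τ (j + k)| := by
      have h1 := norm_tsum_le_tsum_norm (f := fun j : ℕ => τ (j + k))
        (by simpa [Real.norm_eq_abs] using hshift)
      simpa [Real.norm_eq_abs] using h1
    calc |∑' j, τ (j + k)| ≤ ∑' j, |τ (j + k)| := habs
      _ ≤ ∑' j : ℕ, C * A * q ^ (j + k) :=
          Summable.tsum_le_tsum (fun j => key' (j + k)) hshift hgeo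
      _ = ∑' j : ℕ, (C * A * q ^ k) * q ^ j :=
          tsum_congr fun j => by rw [pow_add]; ring
      _ = (C * A * q ^ k) * ∑' j : ℕ, q ^ j :=
          tsum_mul_left (a := C * A * q ^ k) (f := fun j : ℕ => q ^ j)
      _ = C * A * q ^ k / (1 - q) := by
          rw [tsum_geometric_of_lt_one hq0.le hq1, div_eq_mul_inv]
  intro r hr0 hr1
  have hex : ∃ n : ℕ, lam ^ (n + 1) ≤ r := by
    obtain ⟨n, hn⟩ := exists_pow_lt_of_lt_one hr0 hlam1
    exact ⟨n, le_of_lt (lt_of_le_of_lt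
      (pow_le_pow_of_le_one hlam0.le hlam1.le (Nat.le_succ n)) hn)⟩
  set k := Nat.find hex with hkdef
  have hk1 : lam ^ (k + 1) ≤ r := Nat.find_spec hex
  have hk2 : r < lam ^ k := by
    rcases Nat.eq_zero_or_pos k with h | h
    · rw [h, pow_zero]; exact hr1
    · have hlt : k - 1 < k := by omega
      have hmin := Nat.find_min hex hlt
      rw [show k - 1 + 1 = k by omega] at hmin
      exact lt_of_not_ge hmin
  have hrk : (0:ℝ) < lam ^ k := pow_pos hlam0 _
  have hrk1 : (0:ℝ) < lam ^ (k+1) := pow_pos hlam0 _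
  set T : ℝ := ∑' j, τ (j + k) with hTdef
  have hsplit : (fun y => f y - ∑' j, τ j)
      = fun y => (f y - ∑ j ∈ Finset.range k, τ j) + -T := by
    funext y
    have hs := Summable.sum_add_tsum_nat_add k hτ
    rw [hTdef, ← hs]
    ring
  have hgmem : MemLp (fun y => f y - ∑' j, τ j) 2
      (volume.restrict (ball x (lam ^ k))) := by
    rw [hsplit]
    exact (hS k).add (memL2_const x _ _)
  have hfac : Real.sqrt ((r ^ m)⁻¹ * (lam ^ k) ^ m) ≤ L := by
    rw [hLdef]
    apply Real.sqrt_le_sqrt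
    have h1 : ((lam : ℝ) ^ (k+1)) ^ m ≤ r ^ m := pow_le_pow_left₀ hrk1.le hk1 m
    calc (r ^ m)⁻¹ * (lam ^ k) ^ m
        ≤ (((lam : ℝ) ^ (k+1)) ^ m)⁻¹ * (lam ^ k) ^ m := by
          gcongr
      _ = lam⁻¹ ^ m := hargall k
  have hb2 : nrm m x (lam ^ k) (fun y => f y - ∑' j, τ j)
      ≤ C * q ^ k + |T| * Real.sqrt V := by
    calc nrm m x (lam ^ k) (fun y => f y - ∑' j, τ j)
        = nrm m x (lam ^ k)
            (fun y => (f y - ∑ j ∈ Finset.range k, τ j) + -T) := by rw [hsplit]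
      _ ≤ nrm m x (lam ^ k) (fun y => f y - ∑ j ∈ Finset.range k, τ j)
            + nrm m x (lam ^ k) (fun _ => -T) :=
          nrm_triangle x hrk (hS k) (memL2_const x _ _)
      _ ≤ C * q ^ k + |T| * Real.sqrt V := by
          rw [nrm_const x hrk (-T), abs_neg]
          refine add_le_add ?_ le_rfl
          have := hyp k
          rwa [hqpow k] at this
  have hTb : |T| ≤ C * A * q ^ k / (1 - q) := htail k
  have hqr : q ^ k ≤ lam ^ (-α) * r ^ α := by
    have h1 : q ^ (k+1) ≤ r ^ α := by
      rw [← hqpow (k+1)]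
      exact Real.rpow_le_rpow hrk1.le hk1 hα.le
    have hcancel : lam ^ (-α) * q = 1 := by
      rw [hqdef, ← Real.rpow_add hlam0]
      simp
    calc q ^ k = (lam ^ (-α) * q) * q ^ k := by rw [hcancel, one_mul]
      _ = lam ^ (-α) * q ^ (k+1) := by rw [pow_succ]; ring
      _ ≤ lam ^ (-α) * r ^ α := by
          gcongr
  calc nrm m x r (fun y => f y - ∑' j, τ j)
      ≤ Real.sqrt ((r ^ m)⁻¹ * (lam ^ k) ^ m)
          * nrm m x (lam ^ k) (fun y => f y - ∑' j, τ j) :=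
        nrm_mono x hr0 hk2.le hgmem
    _ ≤ L * (C * q ^ k + |T| * Real.sqrt V) :=
        mul_le_mul hfac hb2 (hnn _ _) hL.le
    _ ≤ L * (C * q ^ k + (C * A * q ^ k / (1 - q)) * Real.sqrt V) := by
        gcongr
    _ = L * (1 + A * Real.sqrt V / (1 - q)) * (C * q ^ k) := by ring
    _ ≤ L * (1 + A * Real.sqrt V / (1 - q)) * (C * (lam ^ (-α) * r ^ α)) := by
        have h0 : 0 ≤ L * (1 + A * Real.sqrt V / (1 - q)) := (mul_pos hL hone).le
        exact mul_le_mul_of_nonneg_left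
          (mul_le_mul_of_nonneg_left hqr hC.le) h0
    _ = L * (1 + A * Real.sqrt V / (1 - q)) * lam ^ (-α) * C * r ^ α := by ring

end ConeSchauder
end
end

section
/- Let n ≥ 1 be an integer, 0 < λ < 1, 0 < ε₀ < 1 and c > 1. Then there exists N = N(n, λ, ε₀, c) (for instance N = n·((log ε₀^{−1} + log c)/log λ^{−1} + 1)) such that for every tuple of real numbers 0 ≤ r_1 ≤ r_2 ≤ ⋯ ≤ r_n, the set of integers k for which none of the following conditions holds has at most N elements: (i) λ^{−k} r_1 > c; (ii) there is j ∈ {1,…,n−1} with λ^{−k} r_{j+1} > c and λ^{−k} r_j < ε₀; (iii) λ^{−k} r_n < ε₀. -/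
noncomputable section

open MeasureTheory Metric

namespace ConeSchauder

private lemma ivl_bound {lam ε₀ c ρ : ℝ} (hlam0 : 0 < lam) (hlam1 : lam < 1)
    (hε0 : 0 < ε₀)
    {k k' : ℤ} (h1 : ε₀ ≤ lam ^ (-k) * ρ) (h2 : lam ^ (-k') * ρ ≤ c) (hkk : k ≤ k') :
    k' - k ≤ ⌈Real.log (c / ε₀) / Real.log (1 / lam)⌉ := by
  have hlne : lam ≠ 0 := ne_of_gt hlam0
  have hkey : lam ^ (-(k' - k)) * ε₀ ≤ c := by
    have hpos : (0:ℝ) < lam ^ (-(k' - k)) := zpow_pos hlam0 _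
    calc lam ^ (-(k' - k)) * ε₀ ≤ lam ^ (-(k' - k)) * (lam ^ (-k) * ρ) := by
          exact mul_le_mul_of_nonneg_left h1 (le_of_lt hpos)
      _ = lam ^ (-k') * ρ := by
          rw [← mul_assoc, ← zpow_add₀ hlne]; ring_nf
      _ ≤ c := h2
  have hinv : (1:ℝ) < 1 / lam := by
    rw [lt_div_iff₀ hlam0]; linarith
  have hlog_pos : 0 < Real.log (1 / lam) := Real.log_pos hinv
  have heq : lam ^ (-(k' - k)) = (1 / lam) ^ (k' - k) := by
    rw [one_div, inv_zpow, ← zpow_neg]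
  have hle : (1 / lam) ^ (k' - k) ≤ c / ε₀ := by
    rw [le_div_iff₀ hε0, ← heq]; exact hkey
  have hlpos : (0:ℝ) < (1 / lam) ^ (k' - k) := zpow_pos (by positivity) _
  have := Real.log_le_log hlpos hle
  rw [Real.log_zpow] at this
  have hdle : ((k' - k : ℤ) : ℝ) ≤ Real.log (c / ε₀) / Real.log (1 / lam) := by
    rw [le_div_iff₀ hlog_pos]; exact this
  have := hdle.trans (Int.le_ceil _)
  exact_mod_cast this

/-- finitely many bad scales: the arithmetic content. -/
theorem stmt12 (n : ℕ) (hn : 1 ≤ n) (lam ε₀ c : ℝ)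
    (hlam0 : 0 < lam) (hlam1 : lam < 1) (hε0 : 0 < ε₀) (hε1 : ε₀ < 1) (hc : 1 < c) :
    ∃ N : ℕ, ∀ r : Fin n → ℝ, (∀ a, 0 ≤ r a) → Monotone r →
      {k : ℤ | ¬ (c < lam ^ (-k) * r ⟨0, hn⟩
          ∨ (∃ j : ℕ, ∃ hj : j + 1 < n, c < lam ^ (-k) * r ⟨j + 1, hj⟩
              ∧ lam ^ (-k) * r ⟨j, by omega⟩ < ε₀)
          ∨ lam ^ (-k) * r ⟨n - 1, by omega⟩ < ε₀)}.Finite ∧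
      {k : ℤ | ¬ (c < lam ^ (-k) * r ⟨0, hn⟩
          ∨ (∃ j : ℕ, ∃ hj : j + 1 < n, c < lam ^ (-k) * r ⟨j + 1, hj⟩
              ∧ lam ^ (-k) * r ⟨j, by omega⟩ < ε₀)
          ∨ lam ^ (-k) * r ⟨n - 1, by omega⟩ < ε₀)}.ncard ≤ N := by
  classical
  set M : ℤ := ⌈Real.log (c / ε₀) / Real.log (1 / lam)⌉ with hM
  refine ⟨n * (2 * M + 1).toNat, ?_⟩
  intro r hr hmono
  set S : Fin n → Set ℤ :=
    fun a => {k : ℤ | ε₀ ≤ lam ^ (-k) * r a ∧ lam ^ (-k) * r a ≤ c} with hS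
  -- each S a is contained in a small finset
  have hFin : ∀ a : Fin n, ∃ t : Finset ℤ, S a ⊆ ↑t ∧ t.card ≤ (2 * M + 1).toNat := by
    intro a
    rcases (S a).eq_empty_or_nonempty with he | ⟨k₀, hk₀⟩
    · exact ⟨∅, by simp [he], by simp⟩
    · refine ⟨Finset.Icc (k₀ - M) (k₀ + M), ?_, ?_⟩
      · intro k hk
        simp only [hS, Set.mem_setOf_eq] at hk hk₀
        simp only [Finset.coe_Icc, Set.mem_Icc]
        have hM0 : 0 ≤ M := by
          have h0 := ivl_bound hlam0 hlam1 hε0 hk₀.1 hk₀.2 (le_refl k₀)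
          omega
        constructor
        · rcases le_total k₀ k with h | h
          · omega
          · have := ivl_bound hlam0 hlam1 hε0 hk.1 hk₀.2 h
            omega
        · rcases le_total k k₀ with h | h
          · omega
          · have := ivl_bound hlam0 hlam1 hε0 hk₀.1 hk.2 h
            omega
      · rw [Int.card_Icc]
        have : k₀ + M + 1 - (k₀ - M) = 2 * M + 1 := by ring
        rw [this]
  choose t ht1 ht2 using hFin
  set T : Finset ℤ := Finset.univ.biUnion t with hT
  -- the bad set is contained in the union of the S a
  have hsub : {k : ℤ | ¬ (c < lam ^ (-k) * r ⟨0, hn⟩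
          ∨ (∃ j : ℕ, ∃ hj : j + 1 < n, c < lam ^ (-k) * r ⟨j + 1, hj⟩
              ∧ lam ^ (-k) * r ⟨j, by omega⟩ < ε₀)
          ∨ lam ^ (-k) * r ⟨n - 1, by omega⟩ < ε₀)} ⊆ ↑T := by
    intro k hk
    simp only [Set.mem_setOf_eq] at hk
    push_neg at hk
    obtain ⟨hk1, hk2, hk3⟩ := hk
    by_contra hkT
    have hall : ∀ a : Fin n, k ∉ S a := by
      intro a ha
      exact hkT (Finset.mem_coe.mpr (Finset.mem_biUnion.mpr ⟨a, Finset.mem_univ a, ht1 a ha⟩))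
    have key : ∀ j : ℕ, ∀ hj : j < n, lam ^ (-k) * r ⟨j, hj⟩ < ε₀ := by
      intro j
      induction j with
      | zero =>
        intro hj
        have := hall ⟨0, hj⟩
        simp only [hS, Set.mem_setOf_eq, not_and_or, not_le] at this
        rcases this with h | h
        · exact h
        · exact absurd hk1 (not_le.mpr h)
      | succ j ih =>
        intro hj
        have hjlt : j < n := by omega
        have hprev := ih hjlt
        have hle : lam ^ (-k) * r ⟨j + 1, hj⟩ ≤ c := by
          by_contra hgt
          push_neg at hgt
          have := hk2 j hj hgt
          exact absurd hprev (not_lt.mpr this)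
        have := hall ⟨j + 1, hj⟩
        simp only [hS, Set.mem_setOf_eq, not_and_or, not_le] at this
        rcases this with h | h
        · exact h
        · exact absurd hle (not_le.mpr h)
    have hlast := key (n - 1) (by omega)
    exact absurd hk3 (not_le.mpr hlast)
  constructor
  · exact T.finite_toSet.subset hsub
  · calc _ ≤ (↑T : Set ℤ).ncard := Set.ncard_le_ncard hsub T.finite_toSet
      _ = T.card := Set.ncard_coe_finset T
      _ ≤ ∑ a : Fin n, (t a).card := Finset.card_biUnion_le
      _ ≤ ∑ _a : Fin n, (2 * M + 1).toNat := Finset.sum_le_sum fun a _ => ht2 a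
      _ = n * (2 * M + 1).toNat := by simp [Finset.sum_const, mul_comm]

end ConeSchauder
end
end
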